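/- Let E be a real inner product space, d : E → ℝ differentiable at x with gradient n(x) satisfying ‖n(x)‖ = 1, and ψ : ℝ → ℝ differentiable at d(x) with ψ(d(x))·ψ'(d(x)) > 0. Set g = 2·ψ(d(x))·ψ'(d(x))·n(x). Then there exists ε > 0 such that for every step size η with 0 < η < ε, the gradient-descent update satisfies d(x − η·g) < d(x). In other words, one gradient descent step on the flow regularizer L_flow(x) = ψ(d(x))² with sufficiently small step size strictly decreases the distance of the reconstruction to the data manifold. -/
import Mathlib


/-- One gradient-descent step on the flow regularizer `L_flow(x) = ψ(d(x))²`, with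
gradient `g = 2 ψ(d(x)) ψ'(d(x)) • n(x)` and sufficiently small step size `η`,
strictly decreases the distance `d` of the reconstruction to the data manifold. -/
theorem flow_descent_decreases_distance
    {E : Type*} [NormedAddCommGroup E] [InnerProductSpace ℝ E] [CompleteSpace E]
    (d : E → ℝ) (ψ : ℝ → ℝ) (ψ' : ℝ) (x : E) (n : E → E)
    (hd : HasGradientAt d (n x) x) (hn : ‖n x‖ = 1)
    (hψ : HasDerivAt ψ ψ' (d x))
    (hpos : 0 < ψ (d x) * ψ')
    (g : E) (hg : g = (2 * ψ (d x) * ψ') • n x) :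
    ∃ ε > 0, ∀ η : ℝ, 0 < η → η < ε → d (x - η • g) < d x := by
  set c : ℝ := 2 * ψ (d x) * ψ' with hc
  have hcpos : 0 < c := by
    have : 0 < 2 * (ψ (d x) * ψ') := by linarith
    rw [hc]; linarith [this]
  -- curve η ↦ x - η • g
  have hcurve : HasDerivAt (fun η : ℝ => x - η • g) (-g) 0 := by
    have h1 : HasDerivAt (fun η : ℝ => η • g) g 0 := by
      simpa using (hasDerivAt_id (0:ℝ)).smul_const g
    simpa using h1.const_sub x
  have hfd : HasFDerivAt d (InnerProductSpace.toDual ℝ E (n x)) x := hd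
  have hcomp : HasDerivAt (fun η : ℝ => d (x - η • g))
      ((InnerProductSpace.toDual ℝ E (n x)) (-g)) 0 := by
    have : HasFDerivAt d (InnerProductSpace.toDual ℝ E (n x)) (x - (0:ℝ) • g) := by
      simpa using hfd
    exact this.comp_hasDerivAt 0 hcurve
  have hval : (InnerProductSpace.toDual ℝ E (n x)) (-g) = -c := by
    simp only [InnerProductSpace.toDual_apply_apply, hg, inner_neg_right, inner_smul_right,
      real_inner_self_eq_norm_sq, hn]
    ring
  rw [hval] at hcomp
  -- slope tends to -c
  have hslope := hasDerivAt_iff_tendsto_slope.mp hcomp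
  have hneg : ∀ᶠ η in nhdsWithin (0:ℝ) {(0:ℝ)}ᶜ,
      slope (fun η : ℝ => d (x - η • g)) 0 η < 0 := by
    have := hslope.eventually (eventually_lt_nhds (by linarith : -c < 0))
    exact this
  rw [eventually_nhdsWithin_iff] at hneg
  rcases Metric.eventually_nhds_iff.mp hneg with ⟨ε, hε, hball⟩
  refine ⟨ε, hε, fun η hη hηε => ?_⟩
  have hmem : dist η (0:ℝ) < ε := by
    simpa [Real.dist_eq, abs_of_pos hη] using hηε
  have hs := hball hmem (by simp [ne_of_gt hη])
  have : (d (x - η • g) - d (x - (0:ℝ) • g)) / (η - 0) < 0 := by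
    simpa [slope_def_field, div_eq_inv_mul] using hs
  simp only [zero_smul, sub_zero] at this
  have := (div_neg_iff.mp this)
  rcases this with ⟨h1, h2⟩ | ⟨h1, h2⟩
  · linarith
  · linarith
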